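/- Let λ, t ∈ ℂ, let S ≥ 1 be an integer, let a : Fin S → ℂ, and set φ := Σ_{s ∈ Fin S} (a s)·X^s ∈ Polynomial ℂ. Then for every j ∈ ℕ: Σ_{s ∈ Fin S} a s * iteratedDeriv s (fun z => z^j * Complex.exp (t*z)) λ = Complex.exp (t*λ) * Polynomial.eval t ((T_λ)^[j] φ). -/

import Mathlib

open Polynomial

/-- The ℂ-linear operator `T_λ` on `ℂ[X]`, `T_λ(φ) = φ' + λ•φ`. -/
noncomputable def Tlam (l : ℂ) : Polynomial ℂ →ₗ[ℂ] Polynomial ℂ :=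
  (Polynomial.derivative : Polynomial ℂ →ₗ[ℂ] Polynomial ℂ) + l • LinearMap.id

lemma Tlam_pow_apply (c : ℂ) (n : ℕ) (p : Polynomial ℂ) :
    (Tlam c ^ n) p = ∑ k ∈ Finset.range (n + 1),
      ((n.choose k : ℂ) * c ^ (n - k)) • (Polynomial.derivative^[k] p) := by
  have hD : Commute (Polynomial.derivative : Module.End ℂ (Polynomial ℂ)) (c • 1) :=
    (Commute.one_right _).smul_right c
  rw [show Tlam c = (Polynomial.derivative : Module.End ℂ (Polynomial ℂ)) + c • 1 from rfl,
    hD.add_pow]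
  simp only [LinearMap.sum_apply, Module.End.mul_apply, _root_.smul_pow, one_pow,
    Module.End.pow_apply, Module.End.natCast_apply, LinearMap.smul_apply, Module.End.one_apply,
    Polynomial.iterate_derivative_smul, Nat.cast_smul_eq_nsmul]
  refine Finset.sum_congr rfl fun k hk => ?_
  rw [mul_comm, ← Nat.cast_smul_eq_nsmul ℂ (n.choose k), smul_smul, mul_comm]

lemma eval_Tlam_pow_X_pow_symm (c d : ℂ) (n m : ℕ) :
    Polynomial.eval d ((Tlam c ^ n) (X ^ m)) = Polynomial.eval c ((Tlam d ^ m) (X ^ n)) := by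
  rw [Tlam_pow_apply, Tlam_pow_apply]
  simp only [Polynomial.iterate_derivative_X_pow_eq_smul, Polynomial.eval_finset_sum,
    Polynomial.eval_smul, Polynomial.eval_pow, Polynomial.eval_X, smul_eq_mul]
  have key : ∀ (n m : ℕ) (c d : ℂ),
      ∑ k ∈ Finset.range (n+1),
        (n.choose k : ℂ) * c^(n-k) * ((m.descFactorial k : ℂ) * d^(m-k))
      = ∑ k ∈ Finset.range (max n m + 1),
        ((k.factorial : ℂ) * (n.choose k : ℂ) * (m.choose k : ℂ)) * c^(n-k) * d^(m-k) := by
    intro n m c d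
    rw [← Finset.sum_subset (Finset.range_subset_range.2 (by omega : n+1 ≤ max n m + 1))]
    · refine Finset.sum_congr rfl fun k hk => ?_
      rw [Nat.descFactorial_eq_factorial_mul_choose]; push_cast; ring
    · intro k _ hk
      simp only [Finset.mem_range] at hk
      rw [Nat.choose_eq_zero_of_lt (by omega)]; simp
  rw [key n m c d, key m n d c, max_comm]
  exact Finset.sum_congr rfl fun k hk => by ring

lemma iteratedDeriv_poly_mul_exp (t : ℂ) (n : ℕ) (P : Polynomial ℂ) (c : ℂ) :
    iteratedDeriv n (fun z : ℂ => P.eval z * Complex.exp (t * z)) c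
      = Polynomial.eval c ((Tlam t ^ n) P) * Complex.exp (t * c) := by
  induction n generalizing P c with
  | zero => simp
  | succ n ih =>
    rw [iteratedDeriv_succ']
    have hder : (deriv fun z : ℂ => P.eval z * Complex.exp (t * z))
        = fun z : ℂ => (Tlam t P).eval z * Complex.exp (t * z) := by
      funext z
      have h1 : HasDerivAt (fun z : ℂ => P.eval z) (P.derivative.eval z) z := P.hasDerivAt z
      have h2 : HasDerivAt (fun z : ℂ => Complex.exp (t * z)) (Complex.exp (t * z) * t) z := by
        exact ((Complex.hasDerivAt_exp (t * z)).comp z ((hasDerivAt_id z).const_mul t)).congr_deriv (by simp)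
      rw [(show HasDerivAt (fun z : ℂ => P.eval z * Complex.exp (t * z)) _ z from h1.mul h2).deriv]
      simp only [Tlam, LinearMap.add_apply, LinearMap.coe_mk, Polynomial.eval_add,
        LinearMap.smul_apply, LinearMap.id_apply, Polynomial.eval_smul, smul_eq_mul]
      ring
    rw [hder, ih, pow_succ, Module.End.mul_apply]

/-- for `φ = Σ_{s<S} a_s X^s` and every `j ∈ ℕ`,
`Σ_{s<S} a_s · d^s/dz^s (z^j e^{tz})|_{z=λ} = e^{tλ} · ((T_λ)^j φ)(t)`. -/
theorem sum_iteratedDeriv_exp_eq_eval_Tlam_iterate (l t : ℂ) (S : ℕ)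
    (hS : 1 ≤ S) (a : Fin S → ℂ) (φ : Polynomial ℂ)
    (hφ : φ = ∑ s : Fin S, a s • (Polynomial.X : Polynomial ℂ) ^ (s : ℕ))
    (j : ℕ) :
    ∑ s : Fin S, a s *
        iteratedDeriv (s : ℕ) (fun z : ℂ => z ^ j * Complex.exp (t * z)) l
      = Complex.exp (t * l) * Polynomial.eval t ((Tlam l ^ j) φ) := by
  subst hφ
  have h1 : (fun z : ℂ => z ^ j * Complex.exp (t * z))
      = fun z : ℂ => ((X : Polynomial ℂ) ^ j).eval z * Complex.exp (t * z) := by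
    funext z; simp
  calc ∑ s : Fin S, a s *
        iteratedDeriv (s : ℕ) (fun z : ℂ => z ^ j * Complex.exp (t * z)) l
      = ∑ s : Fin S, a s *
          (Polynomial.eval t ((Tlam l ^ j) ((X : Polynomial ℂ) ^ (s : ℕ)))
            * Complex.exp (t * l)) := by
        refine Finset.sum_congr rfl fun s _ => ?_
        rw [h1, iteratedDeriv_poly_mul_exp, eval_Tlam_pow_X_pow_symm]
    _ = Complex.exp (t * l) *
          Polynomial.eval t ((Tlam l ^ j) (∑ s : Fin S, a s • (X : Polynomial ℂ) ^ (s : ℕ))) := by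
        rw [map_sum, Polynomial.eval_finset_sum, Finset.mul_sum]
        refine Finset.sum_congr rfl fun s _ => ?_
        rw [map_smul, Polynomial.eval_smul, smul_eq_mul]
        ring
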